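/- arXiv:1201.0874 — 4 statements merged into one kernel-verified Lean document; each statement's English description precedes it below -/
import Mathlib

section
/- A closed term t of the λ-calculus with shift and reset is stuck (i.e., t is not a value and t admits no reduction step) if and only if t = E[shift k. s] for some pure evaluation context E, variable k, and term s. -/
namespace LamS

/-- Terms of the λ-calculus with shift and reset, in de Bruijn representation.
    `lam` and `shift` bind variable 0. -/
inductive Tm : Type
  | var : ℕ → Tm
  | lam : Tm → Tm
  | app : Tm → Tm → Tm
  | shift : Tm → Tm
  | reset : Tm → Tm
  deriving DecidableEq

open Tm

/-- Lift (shift up) free de Bruijn indices `≥ c` by `d`. -/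
def liftT (d : ℕ) : ℕ → Tm → Tm
  | c, var n => if n < c then var n else var (n + d)
  | c, lam t => lam (liftT d (c+1) t)
  | c, app a b => app (liftT d c a) (liftT d c b)
  | c, shift t => shift (liftT d (c+1) t)
  | c, reset t => reset (liftT d c t)

/-- Capture-avoiding substitution `t[j := s]` (de Bruijn). -/
def substT : ℕ → Tm → Tm → Tm
  | j, s, var n => if n = j then liftT j 0 s else if j < n then var (n-1) else var n
  | j, s, lam t => lam (substT (j+1) s t)
  | j, s, app a b => app (substT j s a) (substT j s b)
  | j, s, shift t => shift (substT (j+1) s t)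
  | j, s, reset t => reset (substT j s t)

/-- Values are λ-abstractions. -/
def IsValue (t : Tm) : Prop := ∃ b, t = lam b

/-- All free variables are `< n`. -/
def ClosedUnder : ℕ → Tm → Prop
  | n, var m => m < n
  | n, lam t => ClosedUnder (n+1) t
  | n, app a b => ClosedUnder n a ∧ ClosedUnder n b
  | n, shift t => ClosedUnder (n+1) t
  | n, reset t => ClosedUnder n t

def Closed (t : Tm) : Prop := ClosedUnder 0 t

/-- Pure evaluation contexts, interpreted inside-out:
    `appV b E` is `E[(λ.b) []]` and `appL E t` is `E[[] t]`. -/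
inductive PCtx : Type
  | hole : PCtx
  | appV : Tm → PCtx → PCtx
  | appL : PCtx → Tm → PCtx
  deriving DecidableEq

def PCtx.plug : PCtx → Tm → Tm
  | .hole, t => t
  | .appV b E, t => E.plug (app (lam b) t)
  | .appL E s, t => E.plug (app t s)

def PCtx.liftC (d : ℕ) : ℕ → PCtx → PCtx
  | _, .hole => .hole
  | c, .appV b E => .appV (liftT d (c+1) b) (PCtx.liftC d c E)
  | c, .appL E s => .appL (PCtx.liftC d c E) (liftT d c s)

/-- Composition of pure contexts: `(E.comp E').plug t = E.plug (E'.plug t)`. -/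
def PCtx.comp : PCtx → PCtx → PCtx
  | E, .hole => E
  | E, .appV b E' => .appV b (E.comp E')
  | E, .appL E' s => .appL (E.comp E') s

/-- The captured delimited continuation `λx.⟨E[x]⟩`. -/
def contOf (E : PCtx) : Tm := lam (reset ((PCtx.liftC 1 0 E).plug (var 0)))

/-- Call-by-value evaluation contexts, interpreted inside-out. -/
inductive ECtx : Type
  | hole : ECtx
  | appV : Tm → ECtx → ECtx
  | appL : ECtx → Tm → ECtx
  | resetC : ECtx → ECtx
  deriving DecidableEq

def ECtx.plug : ECtx → Tm → Tm
  | .hole, t => t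
  | .appV b F, t => F.plug (app (lam b) t)
  | .appL F s, t => F.plug (app t s)
  | .resetC F, t => F.plug (reset t)

def ClosedECtx : ECtx → Prop
  | .hole => True
  | .appV b F => ClosedUnder 1 b ∧ ClosedECtx F
  | .appL F s => ClosedECtx F ∧ Closed s
  | .resetC F => ClosedECtx F

/-- One-step reduction of λ_S. -/
inductive Red : Tm → Tm → Prop
  | beta (F : ECtx) (t v : Tm) (hv : IsValue v) :
      Red (F.plug (app (lam t) v)) (F.plug (substT 0 v t))
  | cap (F : ECtx) (E : PCtx) (t : Tm) :
      Red (F.plug (reset (E.plug (shift t)))) (F.plug (reset (substT 0 (contOf E) t)))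
  | res (F : ECtx) (v : Tm) (hv : IsValue v) :
      Red (F.plug (reset v)) (F.plug v)

def RedStar : Tm → Tm → Prop := Relation.ReflTransGen Red

/-- A term is stuck if it is not a value and cannot reduce. -/
def Stuck (t : Tm) : Prop := ¬ IsValue t ∧ ∀ u, ¬ Red t u

/-- Evaluation: reduce to an irreducible term. -/
def Eval (t t' : Tm) : Prop := RedStar t t' ∧ ∀ u, ¬ Red t' u

def IsRedex (r : Tm) : Prop :=
  (∃ t v, IsValue v ∧ r = app (lam t) v) ∨
  (∃ E s, r = reset (PCtx.plug E (shift s))) ∨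
  (∃ v, IsValue v ∧ r = reset v)

/-- Labels of the LTS. -/
inductive Label : Type
  | tau : Label
  | val : Tm → Label
  | ctx : PCtx → Label

/-- The labelled transition system for λ_S. -/
inductive Step : Tm → Label → Tm → Prop
  | beta {t v : Tm} (hv : IsValue v) :
      Step (app (lam t) v) .tau (substT 0 v t)
  | resetVal {v : Tm} (hv : IsValue v) :
      Step (reset v) .tau v
  | appL {t0 t0' t1 : Tm} :
      Step t0 .tau t0' → Step (app t0 t1) .tau (app t0' t1)
  | appR {v t t' : Tm} (hv : IsValue v) :
      Step t .tau t' → Step (app v t) .tau (app v t')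
  | resetT {t t' : Tm} :
      Step t .tau t' → Step (reset t) .tau (reset t')
  | resetCap {t t' : Tm} :
      Step t (.ctx .hole) t' → Step (reset t) .tau t'
  | lamApp {t v : Tm} (hv : IsValue v) :
      Step (lam t) (.val v) (substT 0 v t)
  | shiftCap {t : Tm} (E : PCtx) :
      Step (shift t) (.ctx E) (reset (substT 0 (contOf E) t))
  | capL {t0 t0' t1 : Tm} {E : PCtx} :
      Step t0 (.ctx (.appL E t1)) t0' → Step (app t0 t1) (.ctx E) t0'
  | capR {b t t' : Tm} {E : PCtx} :
      Step t (.ctx (.appV b E)) t' → Step (app (lam b) t) (.ctx E) t'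

def TauStar : Tm → Tm → Prop := Relation.ReflTransGen (fun a b => Step a .tau b)

/-- Weak delay transition: τ-steps, then an `l`-step if `l ≠ τ`. -/
def Weak (t : Tm) (l : Label) (t' : Tm) : Prop :=
  match l with
  | .tau => TauStar t t'
  | _ => ∃ u, TauStar t u ∧ Step u l t'

/-- Applicative simulation. -/
def IsSim (R : Tm → Tm → Prop) : Prop :=
  ∀ ⦃t0 t1⦄, R t0 t1 → ∀ ⦃l t0'⦄, Step t0 l t0' →
    ∃ t1', Weak t1 l t1' ∧ R t0' t1'

def IsBisim (R : Tm → Tm → Prop) : Prop := IsSim R ∧ IsSim (flip R)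

/-- Applicative bisimilarity: the largest applicative bisimulation. -/
def Bisim (t0 t1 : Tm) : Prop := ∃ R, IsBisim R ∧ R t0 t1

/-- Big-step applicative simulation. -/
def IsBigSim (R : Tm → Tm → Prop) : Prop :=
  ∀ ⦃t0 t1⦄, R t0 t1 → ∀ ⦃l t0'⦄, l ≠ Label.tau → Weak t0 l t0' →
    ∃ t1', Weak t1 l t1' ∧ R t0' t1'

def IsBigBisim (R : Tm → Tm → Prop) : Prop := IsBigSim R ∧ IsBigSim (flip R)

/-- Big-step applicative bisimilarity. -/
def BigBisim (t0 t1 : Tm) : Prop := ∃ R, IsBigBisim R ∧ R t0 t1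

/-- General contexts. -/
inductive Ctx : Type
  | hole : Ctx
  | lam : Ctx → Ctx
  | appL : Ctx → Tm → Ctx
  | appR : Tm → Ctx → Ctx
  | shift : Ctx → Ctx
  | reset : Ctx → Ctx

/-- Plugging a term in a general context (free variables may be captured). -/
def Ctx.plug : Ctx → Tm → Tm
  | .hole, t => t
  | .lam C, t => Tm.lam (C.plug t)
  | .appL C s, t => Tm.app (C.plug t) s
  | .appR s C, t => Tm.app s (C.plug t)
  | .shift C, t => Tm.shift (C.plug t)
  | .reset C, t => Tm.reset (C.plug t)

def CtxClosedUnder : ℕ → Ctx → Prop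
  | _, .hole => True
  | n, .lam C => CtxClosedUnder (n+1) C
  | n, .appL C s => CtxClosedUnder n C ∧ ClosedUnder n s
  | n, .appR s C => ClosedUnder n s ∧ CtxClosedUnder n C
  | n, .shift C => CtxClosedUnder (n+1) C
  | n, .reset C => CtxClosedUnder n C

def ClosedCtx (C : Ctx) : Prop := CtxClosedUnder 0 C

def EvalsToValue (t : Tm) : Prop := ∃ v, IsValue v ∧ Eval t v

def EvalsToStuck (t : Tm) : Prop := ∃ s, Stuck s ∧ Eval t s

/-- Contextual equivalence on closed terms. -/
def CtxEquiv (t0 t1 : Tm) : Prop :=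
  ∀ C : Ctx, ClosedCtx C →
    (EvalsToValue (C.plug t0) ↔ EvalsToValue (C.plug t1)) ∧
    (EvalsToStuck (C.plug t0) ↔ EvalsToStuck (C.plug t1))

/-- Contextual equivalence restricted to evaluation contexts. -/
def ECtxEquiv (t0 t1 : Tm) : Prop :=
  ∀ F : ECtx, ClosedECtx F →
    (EvalsToValue (F.plug t0) ↔ EvalsToValue (F.plug t1)) ∧
    (EvalsToStuck (F.plug t0) ↔ EvalsToStuck (F.plug t1))

/-- Lifting a substitution under a binder. -/
def liftSub (σ : ℕ → Tm) : ℕ → Tm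
  | 0 => var 0
  | n+1 => liftT 1 0 (σ n)

/-- Apply a substitution to all free variables of a term. -/
def applySub (σ : ℕ → Tm) : Tm → Tm
  | var n => σ n
  | lam t => lam (applySub (liftSub σ) t)
  | app a b => app (applySub σ a) (applySub σ b)
  | shift t => shift (applySub (liftSub σ) t)
  | reset t => reset (applySub σ t)

/-- A closing substitution maps every variable to a closed value. -/
def ClosingSub (σ : ℕ → Tm) : Prop := ∀ n, IsValue (σ n) ∧ Closed (σ n)

/-- Open extension of a relation on closed terms. -/
def OpenExt (R : Tm → Tm → Prop) (t0 t1 : Tm) : Prop :=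
  ∀ σ, ClosingSub σ → R (applySub σ t0) (applySub σ t1)

/-- Howe's closure of applicative bisimilarity (compatible refinement rules inlined). -/
inductive Howe : Tm → Tm → Prop
  | base {t0 t1} : OpenExt Bisim t0 t1 → Howe t0 t1
  | right {t0 t2 t1} : Howe t0 t2 → OpenExt Bisim t2 t1 → Howe t0 t1
  | compVar (n : ℕ) : Howe (var n) (var n)
  | compLam {t0 t1} : Howe t0 t1 → Howe (lam t0) (lam t1)
  | compApp {a0 a1 b0 b1} : Howe a0 a1 → Howe b0 b1 → Howe (app a0 b0) (app a1 b1)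
  | compShift {t0 t1} : Howe t0 t1 → Howe (shift t0) (shift t1)
  | compReset {t0 t1} : Howe t0 t1 → Howe (reset t0) (reset t1)

/-- Howe's closure restricted to closed terms. -/
def HoweC (t0 t1 : Tm) : Prop := Closed t0 ∧ Closed t1 ∧ Howe t0 t1

/-- Extension of Howe's closure to pure contexts. -/
inductive PCtxHowe : PCtx → PCtx → Prop
  | hole : PCtxHowe .hole .hole
  | appV {b0 b1 E0 E1} : Howe b0 b1 → PCtxHowe E0 E1 → PCtxHowe (.appV b0 E0) (.appV b1 E1)
  | appL {E0 E1 t0 t1} : PCtxHowe E0 E1 → Howe t0 t1 → PCtxHowe (.appL E0 t0) (.appL E1 t1)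

/-- Extension of Howe's closure to labels. -/
def LabHowe : Label → Label → Prop
  | .tau, .tau => True
  | .val v0, .val v1 => Closed v0 ∧ Closed v1 ∧ Howe v0 v1
  | .ctx E0, .ctx E1 => PCtxHowe E0 E1
  | _, _ => False

/-- ω = λx. x x -/
def omegaTm : Tm := lam (app (var 0) (var 0))

/-- Ω = ω ω, the standard diverging term. -/
def OmegaTm : Tm := app omegaTm omegaTm

/-- Every τ-reachable term can do a τ-step: only infinite τ-sequences. -/
def Diverges (t : Tm) : Prop := ∀ u, TauStar t u → ∃ u', Step u .tau u'

/-- No weak non-τ transition. -/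
def NoObs (t : Tm) : Prop := ∀ l t', l ≠ Label.tau → ¬ Weak t l t'

/-! ### Auxiliary material for the stuck characterization -/

/-- Outside-in characterization of `E.plug (shift s)`. -/
inductive QShift : Tm → Prop
  | base (s : Tm) : QShift (shift s)
  | appV (b u : Tm) : QShift u → QShift (app (lam b) u)
  | appL (u s : Tm) : QShift u → QShift (app u s)

/-- Outside-in characterization of `F.plug r` with `r` a redex. -/
inductive RRed : Tm → Prop
  | base {r : Tm} : IsRedex r → RRed r
  | appV (b u : Tm) : RRed u → RRed (app (lam b) u)
  | appL (u s : Tm) : RRed u → RRed (app u s)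
  | res (u : Tm) : RRed u → RRed (reset u)

theorem comp_plug (E E' : PCtx) (t : Tm) :
    (E.comp E').plug t = E.plug (E'.plug t) := by
  induction E' generalizing t with
  | hole => rfl
  | appV b E' ih => simp [PCtx.comp, PCtx.plug, ih]
  | appL E' s ih => simp [PCtx.comp, PCtx.plug, ih]

def eComp : ECtx → ECtx → ECtx
  | F, .hole => F
  | F, .appV b F' => .appV b (eComp F F')
  | F, .appL F' s => .appL (eComp F F') s
  | F, .resetC F' => .resetC (eComp F F')

theorem eComp_plug (F F' : ECtx) (t : Tm) :
    (eComp F F').plug t = F.plug (F'.plug t) := by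
  induction F' generalizing t with
  | hole => rfl
  | appV b F' ih => simp [eComp, ECtx.plug, ih]
  | appL F' s ih => simp [eComp, ECtx.plug, ih]
  | resetC F' ih => simp [eComp, ECtx.plug, ih]

theorem qshift_plug (E : PCtx) {u : Tm} (h : QShift u) : QShift (E.plug u) := by
  induction E generalizing u with
  | hole => exact h
  | appV b E ih => exact ih (QShift.appV _ _ h)
  | appL E s ih => exact ih (QShift.appL _ _ h)

theorem qshift_decomp {t : Tm} (h : QShift t) :
    ∃ (E : PCtx) (s : Tm), t = E.plug (shift s) := by
  induction h with
  | base s => exact ⟨.hole, s, rfl⟩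
  | appV b u _ ih =>
      obtain ⟨E, s, rfl⟩ := ih
      exact ⟨(PCtx.appV b .hole).comp E, s, by simp [comp_plug, PCtx.plug]⟩
  | appL u s' _ ih =>
      obtain ⟨E, s, rfl⟩ := ih
      exact ⟨(PCtx.appL .hole s').comp E, s, by simp [comp_plug, PCtx.plug]⟩

theorem rred_plug (F : ECtx) {u : Tm} (h : RRed u) : RRed (F.plug u) := by
  induction F generalizing u with
  | hole => exact h
  | appV b F ih => exact ih (RRed.appV _ _ h)
  | appL F s ih => exact ih (RRed.appL _ _ h)
  | resetC F ih => exact ih (RRed.res _ h)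

theorem rred_decomp {t : Tm} (h : RRed t) :
    ∃ (F : ECtx) (r : Tm), IsRedex r ∧ t = F.plug r := by
  induction h with
  | base h => exact ⟨.hole, _, h, rfl⟩
  | appV b u _ ih =>
      obtain ⟨F, r, hr, rfl⟩ := ih
      exact ⟨eComp (ECtx.appV b .hole) F, r, hr, by simp [eComp_plug, ECtx.plug]⟩
  | appL u s _ ih =>
      obtain ⟨F, r, hr, rfl⟩ := ih
      exact ⟨eComp (ECtx.appL .hole s) F, r, hr, by simp [eComp_plug, ECtx.plug]⟩
  | res u _ ih =>
      obtain ⟨F, r, hr, rfl⟩ := ih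
      exact ⟨eComp (ECtx.resetC .hole) F, r, hr, by simp [eComp_plug, ECtx.plug]⟩

theorem qshift_not_value {t : Tm} (h : QShift t) : ¬ IsValue t := by
  cases h <;> rintro ⟨b, hb⟩ <;> simp_all

theorem qshift_not_rred {t : Tm} (h : QShift t) : ¬ RRed t := by
  induction h with
  | base s =>
      intro hr
      cases hr with
      | base h =>
          rcases h with ⟨t', v, hv, h⟩ | ⟨E, s', h⟩ | ⟨v, hv, h⟩ <;> simp_all
  | appV b u hq ih =>
      intro hr
      cases hr with
      | base h =>
          rcases h with ⟨t', v, hv, h⟩ | ⟨E, s', h⟩ | ⟨v, hv, h⟩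
          · obtain ⟨h1, h2⟩ := Tm.app.inj h
            exact qshift_not_value hq (h2 ▸ hv)
          · simp_all
          · obtain ⟨b', rfl⟩ := hv; simp_all
      | appV b' u' hr' => exact ih hr'
      | appL u' s' hr' =>
          cases hr' with
          | base h =>
              rcases h with ⟨t', v, hv, h⟩ | ⟨E, s', h⟩ | ⟨v, hv, h⟩ <;> simp_all
  | appL u s hq ih =>
      intro hr
      cases hr with
      | base h =>
          rcases h with ⟨t', v, hv, h⟩ | ⟨E, s', h⟩ | ⟨v, hv, h⟩
          · obtain ⟨h1, h2⟩ := Tm.app.inj h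
            exact qshift_not_value hq ⟨_, h1⟩
          · simp_all
          · obtain ⟨b', rfl⟩ := hv; simp_all
      | appV b' u' hr' =>
          exact qshift_not_value hq ⟨b', rfl⟩
      | appL u' s' hr' => exact ih hr'

theorem red_rred {t u : Tm} (h : Red t u) : RRed t := by
  cases h with
  | beta F t v hv => exact rred_plug F (RRed.base (Or.inl ⟨t, v, hv, rfl⟩))
  | cap F E t => exact rred_plug F (RRed.base (Or.inr (Or.inl ⟨E, t, rfl⟩)))
  | res F v hv => exact rred_plug F (RRed.base (Or.inr (Or.inr ⟨v, hv, rfl⟩)))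

theorem redex_red {r : Tm} (h : IsRedex r) : ∃ u, Red r u := by
  rcases h with ⟨t, v, hv, rfl⟩ | ⟨E, s, rfl⟩ | ⟨v, hv, rfl⟩
  · exact ⟨_, Red.beta .hole t v hv⟩
  · exact ⟨_, Red.cap .hole E s⟩
  · exact ⟨_, Red.res .hole v hv⟩

theorem progress : ∀ (t : Tm) (n : ℕ), ClosedUnder n t → n = 0 →
    IsValue t ∨ QShift t ∨ RRed t := by
  intro t
  induction t with
  | var m => intro n h hn; subst hn; exact absurd h (Nat.not_lt_zero m)
  | lam b => intro n h hn; exact Or.inl ⟨b, rfl⟩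
  | app a b iha ihb =>
      intro n h hn; subst hn
      obtain ⟨ha, hb⟩ := h
      rcases iha 0 ha rfl with ⟨b', rfl⟩ | hq | hr
      · rcases ihb 0 hb rfl with hv | hq | hr
        · exact Or.inr (Or.inr (RRed.base (Or.inl ⟨b', b, hv, rfl⟩)))
        · exact Or.inr (Or.inl (QShift.appV _ _ hq))
        · exact Or.inr (Or.inr (RRed.appV _ _ hr))
      · exact Or.inr (Or.inl (QShift.appL _ _ hq))
      · exact Or.inr (Or.inr (RRed.appL _ _ hr))
  | shift s ih => intro n h hn; exact Or.inr (Or.inl (QShift.base s))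
  | reset u ih =>
      intro n h hn; subst hn
      rcases ih 0 h rfl with hv | hq | hr
      · exact Or.inr (Or.inr (RRed.base (Or.inr (Or.inr ⟨u, hv, rfl⟩))))
      · obtain ⟨E, s, rfl⟩ := qshift_decomp hq
        exact Or.inr (Or.inr (RRed.base (Or.inr (Or.inl ⟨E, s, rfl⟩))))
      · exact Or.inr (Or.inr (RRed.res _ hr))

end LamS
open LamS LamS.Tm in
/-- a closed term is stuck iff it is of the form E[Sk.s]. -/
theorem stuck_characterization :
    ∀ t : Tm, Closed t → (Stuck t ↔ ∃ (E : PCtx) (s : Tm), t = E.plug (shift s)) := by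
  intro t ht
  constructor
  · rintro ⟨hnv, hnr⟩
    rcases progress t 0 ht rfl with hv | hq | hr
    · exact absurd hv hnv
    · exact qshift_decomp hq
    · obtain ⟨F, r, hredex, rfl⟩ := rred_decomp hr
      obtain ⟨u, hu⟩ := redex_red hredex
      cases hu with
      | beta F' t' v hv =>
          exact absurd (Red.beta (eComp F F') t' v hv)
            (by rw [eComp_plug, eComp_plug]; exact hnr _)
      | cap F' E' t' =>
          exact absurd (Red.cap (eComp F F') E' t')
            (by rw [eComp_plug, eComp_plug]; exact hnr _)
      | res F' v hv =>
          exact absurd (Red.res (eComp F F') v hv)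
            (by rw [eComp_plug, eComp_plug]; exact hnr _)
  · rintro ⟨E, s, rfl⟩
    have hq : QShift (E.plug (shift s)) := qshift_plug E (QShift.base s)
    exact ⟨qshift_not_value hq, fun u hu => qshift_not_rred hq (red_rred hu)⟩
end

section
/- If t →τ t' in the LTS for λ_S, then t and t' are applicative bisimilar, i.e., the relation {(t, t') : t →τ t'} is contained in applicative bisimilarity ≈. -/
namespace LamS

open Tm

/-- Labels of the same kind. -/
def Lmatch : Label → Label → Prop
  | .tau, .tau => True
  | .val _, .val _ => True
  | .ctx _, .ctx _ => True
  | _, _ => False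

lemma lam_no_tau {b u : Tm} (h : Step (lam b) .tau u) : False := by cases h

lemma lam_no_ctx {b u : Tm} {E : PCtx} (h : Step (lam b) (.ctx E) u) : False := by cases h

lemma step_det : ∀ {t l1 u1}, Step t l1 u1 → ∀ {l2 u2}, Step t l2 u2 →
    Lmatch l1 l2 ∧ (l1 = l2 → u1 = u2) := by
  intro t l1 u1 h1
  induction h1 with
  | @beta b v hv =>
    intro l2 u2 h2
    cases h2 with
    | beta => exact ⟨trivial, fun _ => rfl⟩
    | appL h => exact absurd h lam_no_tau
    | appR hv' h => obtain ⟨b', rfl⟩ := hv; exact absurd h lam_no_tau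
    | capL h => exact absurd h lam_no_ctx
    | capR h => obtain ⟨b', rfl⟩ := hv; exact absurd h lam_no_ctx
  | @resetVal v hv =>
    intro l2 u2 h2
    obtain ⟨b, rfl⟩ := hv
    cases h2 with
    | resetVal => exact ⟨trivial, fun _ => rfl⟩
    | resetT h => exact absurd h lam_no_tau
    | resetCap h => exact absurd h lam_no_ctx
  | @appL t0 t0' t1 h ih =>
    intro l2 u2 h2
    cases h2 with
    | beta hv => exact absurd h lam_no_tau
    | appL h' => exact ⟨trivial, fun _ => by rw [(ih h').2 rfl]⟩
    | appR hv h' => obtain ⟨b, rfl⟩ := hv; exact absurd h lam_no_tau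
    | capL h' => exact absurd (ih h').1 id
    | capR h' => exact absurd h lam_no_tau
  | @appR v t t' hv h ih =>
    intro l2 u2 h2
    cases h2 with
    | beta hv' => obtain ⟨b, rfl⟩ := hv'; exact absurd h lam_no_tau
    | appL h' => obtain ⟨b, rfl⟩ := hv; exact absurd h' lam_no_tau
    | appR hv' h' => exact ⟨trivial, fun _ => by rw [(ih h').2 rfl]⟩
    | capL h' => obtain ⟨b, rfl⟩ := hv; exact absurd h' lam_no_ctx
    | capR h' => exact absurd (ih h').1 id
  | @resetT t t' h ih =>
    intro l2 u2 h2
    cases h2 with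
    | resetVal hv => obtain ⟨b, rfl⟩ := hv; exact absurd h lam_no_tau
    | resetT h' => exact ⟨trivial, fun _ => by rw [(ih h').2 rfl]⟩
    | resetCap h' => exact absurd (ih h').1 id
  | @resetCap t t' h ih =>
    intro l2 u2 h2
    cases h2 with
    | resetVal hv => obtain ⟨b, rfl⟩ := hv; exact absurd h lam_no_ctx
    | resetT h' => exact absurd (ih h').1 id
    | resetCap h' => exact ⟨trivial, fun _ => (ih h').2 rfl⟩
  | @lamApp t v hv =>
    intro l2 u2 h2
    cases h2 with
    | lamApp hv' => exact ⟨trivial, fun he => by cases he; rfl⟩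
  | @shiftCap t E =>
    intro l2 u2 h2
    cases h2 with
    | shiftCap => exact ⟨trivial, fun he => by cases he; rfl⟩
  | @capL t0 t0' t1 E h ih =>
    intro l2 u2 h2
    cases h2 with
    | beta hv => exact absurd h lam_no_ctx
    | appL h' => exact absurd (ih h').1 id
    | appR hv h' => obtain ⟨b, rfl⟩ := hv; exact absurd h lam_no_ctx
    | capL h' =>
      refine ⟨trivial, fun he => ?_⟩
      cases he
      exact (ih h').2 rfl
    | capR h' => exact absurd h lam_no_ctx
  | @capR b t t' E h ih =>
    intro l2 u2 h2
    cases h2 with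
    | beta hv => obtain ⟨b', rfl⟩ := hv; exact absurd h lam_no_ctx
    | appL h' => exact absurd h' lam_no_tau
    | appR hv h' => exact absurd (ih h').1 id
    | capL h' => exact absurd h' lam_no_ctx
    | capR h' =>
      refine ⟨trivial, fun he => ?_⟩
      cases he
      exact (ih h').2 rfl

/-- A τ-step forces every step from the same term to be the same τ-step. -/
lemma tau_det {t u : Tm} (h : Step t .tau u) {l u'} (h' : Step t l u') :
    l = .tau ∧ u' = u := by
  have := step_det h h'
  cases l with
  | tau => exact ⟨rfl, (this.2 rfl).symm⟩
  | val v => exact absurd this.1 id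
  | ctx E => exact absurd this.1 id

lemma weak_refl_like (t : Tm) {l t'} (h : Step t l t') : Weak t l t' := by
  cases l with
  | tau => exact Relation.ReflTransGen.single h
  | val v => exact ⟨t, Relation.ReflTransGen.refl, h⟩
  | ctx E => exact ⟨t, Relation.ReflTransGen.refl, h⟩

lemma weak_of_taustar_step {t u : Tm} (hts : TauStar t u) {l t'} (h : Step u l t') :
    Weak t l t' := by
  cases l with
  | tau => exact hts.trans (Relation.ReflTransGen.single h)
  | val v => exact ⟨u, hts, h⟩
  | ctx E => exact ⟨u, hts, h⟩

/-- The relation `TauStar ∪ TauStar⁻¹` is a simulation. -/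
lemma tauRel_sim : IsSim (fun a b => TauStar a b ∨ TauStar b a) := by
  intro t0 t1 h l t0' hs
  cases h with
  | inl h =>
    rcases Relation.ReflTransGen.cases_head h with rfl | ⟨u, hu, hu'⟩
    · exact ⟨t0', weak_refl_like t0 hs, Or.inl Relation.ReflTransGen.refl⟩
    · obtain ⟨rfl, rfl⟩ := tau_det hu hs
      exact ⟨t1, Relation.ReflTransGen.refl, Or.inl hu'⟩
  | inr h =>
    exact ⟨t0', weak_of_taustar_step h hs, Or.inl Relation.ReflTransGen.refl⟩

end LamS
open LamS LamS.Tm in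
/-- internal steps are included in applicative bisimilarity. -/
theorem tau_step_bisim :
    ∀ t t' : Tm, Closed t → Step t Label.tau t' → Bisim t t' := by
  intro t t' _ hs
  refine ⟨fun a b => TauStar a b ∨ TauStar b a, ⟨tauRel_sim, ?_⟩,
    Or.inl (Relation.ReflTransGen.single hs)⟩
  intro t0 t1 h l t0' hstep
  have h' : TauStar t0 t1 ∨ TauStar t1 t0 := h.symm
  obtain ⟨t1', hw, hr⟩ := tauRel_sim h' hstep
  exact ⟨t1', hw, hr.symm⟩
end

section
/- Applicative bisimilarity coincides with big-step applicative bisimilarity on closed terms of λ_S: ≈ = ≈_bs. -/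
namespace LamS

open Tm

/-! ### Auxiliary lemmas -/

theorem step_det_s7 : ∀ {t l u}, Step t l u → ∀ {l' u'}, Step t l' u' →
    (l = Label.tau ∨ l' = Label.tau ∨ l = l') → l' = l ∧ u' = u := by
  intro t l u h
  induction h with
  | @beta t v hv =>
    intro l' u' h' _
    cases h' with
    | beta hv' => exact ⟨rfl, rfl⟩
    | appL hs => nomatch hs
    | appR hv' hs => obtain ⟨b, rfl⟩ := hv; nomatch hs
    | capL hs => nomatch hs
    | capR hs => obtain ⟨b, rfl⟩ := hv; nomatch hs
  | @resetVal v hv =>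
    intro l' u' h' _
    cases h' with
    | resetVal hv' => exact ⟨rfl, rfl⟩
    | resetT hs => obtain ⟨b, rfl⟩ := hv; nomatch hs
    | resetCap hs => obtain ⟨b, rfl⟩ := hv; nomatch hs
  | @appL t0 t0' t1 hs ih =>
    intro l' u' h' _
    cases h' with
    | beta hv' => nomatch hs
    | appL hs' => exact ⟨rfl, by rw [(ih hs' (Or.inl rfl)).2]⟩
    | appR hv' hs' => obtain ⟨b, rfl⟩ := hv'; nomatch hs
    | capL hs' => cases (ih hs' (Or.inl rfl)).1
    | capR hs' => nomatch hs
  | @appR v t t' hv hs ih =>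
    intro l' u' h' _
    cases h' with
    | beta hv' => obtain ⟨b, rfl⟩ := hv'; nomatch hs
    | appL hs' => obtain ⟨b, rfl⟩ := hv; nomatch hs'
    | appR hv' hs' => exact ⟨rfl, by rw [(ih hs' (Or.inl rfl)).2]⟩
    | capL hs' => obtain ⟨b, rfl⟩ := hv; nomatch hs'
    | capR hs' => cases (ih hs' (Or.inl rfl)).1
  | @resetT t0 t0' hs ih =>
    intro l' u' h' _
    cases h' with
    | resetVal hv' => obtain ⟨b, rfl⟩ := hv'; nomatch hs
    | resetT hs' => exact ⟨rfl, by rw [(ih hs' (Or.inl rfl)).2]⟩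
    | resetCap hs' => cases (ih hs' (Or.inl rfl)).1
  | @resetCap t0 t0' hs ih =>
    intro l' u' h' _
    cases h' with
    | resetVal hv' => obtain ⟨b, rfl⟩ := hv'; nomatch hs
    | resetT hs' => cases (ih hs' (Or.inr (Or.inl rfl))).1
    | resetCap hs' => exact ⟨rfl, (ih hs' (Or.inr (Or.inr rfl))).2⟩
  | @lamApp t v hv =>
    intro l' u' h' hcond
    cases h' with
    | lamApp hv' =>
      rcases hcond with h | h | h
      · cases h
      · cases h
      · cases h; exact ⟨rfl, rfl⟩
  | @shiftCap t E =>
    intro l' u' h' hcond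
    cases h' with
    | shiftCap E' =>
      rcases hcond with h | h | h
      · cases h
      · cases h
      · cases h; exact ⟨rfl, rfl⟩
  | @capL t0 t0' t1 E hs ih =>
    intro l' u' h' hcond
    cases h' with
    | beta hv' => nomatch hs
    | appL hs' => cases (ih hs' (Or.inr (Or.inl rfl))).1
    | appR hv' hs' => obtain ⟨b, rfl⟩ := hv'; nomatch hs
    | @capL _ _ _ E' hs' =>
      rcases hcond with h | h | h
      · cases h
      · cases h
      · cases h; exact ⟨rfl, (ih hs' (Or.inr (Or.inr rfl))).2⟩
    | capR hs' => nomatch hs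
  | @capR b t t' E hs ih =>
    intro l' u' h' hcond
    cases h' with
    | beta hv' => obtain ⟨c, rfl⟩ := hv'; nomatch hs
    | appL hs' => nomatch hs'
    | appR hv' hs' => cases (ih hs' (Or.inr (Or.inl rfl))).1
    | capL hs' => nomatch hs'
    | @capR _ _ _ E' hs' =>
      rcases hcond with h | h | h
      · cases h
      · cases h
      · cases h; exact ⟨rfl, (ih hs' (Or.inr (Or.inr rfl))).2⟩

theorem weak_tau_left {a b l c} (h : TauStar a b) (h2 : Weak b l c) : Weak a l c := by
  cases l with
  | tau => exact Relation.ReflTransGen.trans h h2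
  | val v => obtain ⟨u, hu, hs⟩ := h2; exact ⟨u, Relation.ReflTransGen.trans h hu, hs⟩
  | ctx E => obtain ⟨u, hu, hs⟩ := h2; exact ⟨u, Relation.ReflTransGen.trans h hu, hs⟩

theorem sim_taustar {R : Tm → Tm → Prop} (hR : IsSim R) {t0 t1 u}
    (hr : R t0 t1) (h : TauStar t0 u) : ∃ u1, TauStar t1 u1 ∧ R u u1 := by
  induction h with
  | refl => exact ⟨t1, Relation.ReflTransGen.refl, hr⟩
  | tail h1 h2 ih =>
    obtain ⟨u1, hu1, hr1⟩ := ih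
    obtain ⟨u2, hu2, hr2⟩ := hR hr1 h2
    exact ⟨u2, Relation.ReflTransGen.trans hu1 hu2, hr2⟩

theorem sim_weak {R : Tm → Tm → Prop} (hR : IsSim R) {t0 t1 l t0'}
    (hr : R t0 t1) (h : Weak t0 l t0') : ∃ t1', Weak t1 l t1' ∧ R t0' t1' := by
  cases l with
  | tau => exact sim_taustar hR hr h
  | val v =>
    obtain ⟨u, hu, hs⟩ := h
    obtain ⟨u1, h1, h2⟩ := sim_taustar hR hr hu
    obtain ⟨t1', hw, hr'⟩ := hR h2 hs
    exact ⟨t1', weak_tau_left h1 hw, hr'⟩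
  | ctx E =>
    obtain ⟨u, hu, hs⟩ := h
    obtain ⟨u1, h1, h2⟩ := sim_taustar hR hr hu
    obtain ⟨t1', hw, hr'⟩ := hR h2 hs
    exact ⟨t1', weak_tau_left h1 hw, hr'⟩

theorem bisim_symm {t0 t1} : Bisim t0 t1 → Bisim t1 t0
  | ⟨R, hR, h⟩ => ⟨flip R, ⟨hR.2, hR.1⟩, h⟩

theorem bigBisim_symm {t0 t1} : BigBisim t0 t1 → BigBisim t1 t0
  | ⟨R, hR, h⟩ => ⟨flip R, ⟨hR.2, hR.1⟩, h⟩

theorem bisim_isBigSim : IsBigSim Bisim := by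
  rintro t0 t1 ⟨R, hR, h⟩ l t0' hl hw
  obtain ⟨t1', hw', h'⟩ := sim_weak hR.1 h hw
  exact ⟨t1', hw', R, hR, h'⟩

theorem bisim_isBigSim_flip : IsBigSim (flip Bisim) := by
  intro t0 t1 h l t0' hl hw
  obtain ⟨t1', hw', h'⟩ := bisim_isBigSim (bisim_symm h) hl hw
  exact ⟨t1', hw', bisim_symm h'⟩

theorem bigBisim_isBigSim : IsBigSim BigBisim := by
  rintro t0 t1 ⟨R, hR, h⟩ l t0' hl hw
  obtain ⟨t1', hw', h'⟩ := hR.1 h hl hw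
  exact ⟨t1', hw', R, hR, h'⟩

theorem bigBisim_isBigSim_flip : IsBigSim (flip BigBisim) := by
  intro t0 t1 h l t0' hl hw
  obtain ⟨t1', hw', h'⟩ := bigBisim_isBigSim (bigBisim_symm h) hl hw
  exact ⟨t1', hw', bigBisim_symm h'⟩

/-- Determinism of τ-steps lets us factor a weak step through any τ-descendant. -/
theorem taustar_factor {a0 a w l x} (h1 : TauStar a0 a) (h2 : TauStar a0 w)
    (hs : Step w l x) (hl : l ≠ Label.tau) : TauStar a w := by
  revert h2
  induction h1 using Relation.ReflTransGen.head_induction_on with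
  | refl => exact fun h2 => h2
  | head hac hcb ih =>
    intro h2
    rcases h2.cases_head with rfl | ⟨c', hc', h2'⟩
    · exact absurd (step_det_s7 hs hac (Or.inr (Or.inl rfl))).1.symm hl
    · cases (step_det_s7 hac hc' (Or.inl rfl)).2
      exact ih h2'

/-- τ-closure on the left of big-step bisimilarity. -/
def RTclos (a b : Tm) : Prop := ∃ a0, TauStar a0 a ∧ BigBisim a0 b

theorem RTclos_isBigBisim : IsBigBisim RTclos := by
  constructor
  · rintro a b ⟨a0, hts, hbb⟩ l a' hl hw
    obtain ⟨b', hwb, hbb'⟩ := bigBisim_isBigSim hbb hl (weak_tau_left hts hw)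
    exact ⟨b', hwb, a', Relation.ReflTransGen.refl, hbb'⟩
  · rintro b a ⟨a0, hts, hbb⟩ l b' hl hw
    obtain ⟨a'', hwa, hbb'⟩ := bigBisim_isBigSim_flip (hbb : flip BigBisim b a0) hl hw
    obtain ⟨w, hw1, hw2⟩ : ∃ w, TauStar a0 w ∧ Step w l a'' := by
      cases l with
      | tau => exact absurd rfl hl
      | val v => exact hwa
      | ctx E => exact hwa
    have hWeak : Weak a l a'' := by
      have hfac : TauStar a w := taustar_factor hts hw1 hw2 hl
      cases l with
      | tau => exact absurd rfl hl
      | val v => exact ⟨w, hfac, hw2⟩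
      | ctx E => exact ⟨w, hfac, hw2⟩
    exact ⟨a'', hWeak, a'', Relation.ReflTransGen.refl, (hbb' : BigBisim a'' b')⟩

theorem bigBisim_tau_left {t0 t0' t1} (hs : Step t0 .tau t0') (h : BigBisim t0 t1) :
    BigBisim t0' t1 :=
  ⟨RTclos, RTclos_isBigBisim, t0, Relation.ReflTransGen.single hs, h⟩

theorem bigBisim_isSim : IsSim BigBisim := by
  intro t0 t1 h l t0' hs
  cases l with
  | tau => exact ⟨t1, Relation.ReflTransGen.refl, bigBisim_tau_left hs h⟩
  | val v =>
    have hw0 : Weak t0 (Label.val v) t0' := ⟨t0, Relation.ReflTransGen.refl, hs⟩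
    obtain ⟨t1', hw, h'⟩ := bigBisim_isBigSim h (by intro hc; cases hc) hw0
    exact ⟨t1', hw, h'⟩
  | ctx E =>
    have hw0 : Weak t0 (Label.ctx E) t0' := ⟨t0, Relation.ReflTransGen.refl, hs⟩
    obtain ⟨t1', hw, h'⟩ := bigBisim_isBigSim h (by intro hc; cases hc) hw0
    exact ⟨t1', hw, h'⟩

theorem bigBisim_isSim_flip : IsSim (flip BigBisim) := by
  intro t0 t1 h l t0' hs
  obtain ⟨t1', hw, h'⟩ := bigBisim_isSim (bigBisim_symm h) hs
  exact ⟨t1', hw, bigBisim_symm h'⟩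

end LamS
open LamS LamS.Tm in
/-- applicative bisimilarity coincides with big-step applicative
    bisimilarity on closed terms. -/
theorem bisim_eq_bigBisim :
    ∀ t0 t1 : Tm, Closed t0 → Closed t1 → (Bisim t0 t1 ↔ BigBisim t0 t1) := by
  intro t0 t1 _ _
  constructor
  · intro h
    exact ⟨Bisim, ⟨bisim_isBigSim, bisim_isBigSim_flip⟩, h⟩
  · intro h
    exact ⟨BigBisim, ⟨bigBisim_isSim, bigBisim_isSim_flip⟩, h⟩
end

section
/- Howe's closure of applicative bisimilarity for λ_S is substitutive: if t0 H t1 and v0 H v1 (H being Howe's closure), then t0{v0/x} H t1{v1/x}. -/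
namespace LamS
open Tm

theorem liftT_closed : ∀ (t : Tm) {c} (d : ℕ), ClosedUnder c t → liftT d c t = t
  | var n, c, d, hc => by
      have : n < c := hc
      simp [liftT, this]
  | lam t, _, d, hc => by simp only [liftT]; rw [liftT_closed t d hc]
  | app a b, _, d, hc => by
      simp only [liftT]; rw [liftT_closed a d hc.1, liftT_closed b d hc.2]
  | shift t, _, d, hc => by simp only [liftT]; rw [liftT_closed t d hc]
  | reset t, _, d, hc => by simp only [liftT]; rw [liftT_closed t d hc]

theorem closedUnder_liftT :
    ∀ (t : Tm) (c : ℕ) {k d : ℕ}, ClosedUnder k t → ClosedUnder (k + d) (liftT d c t)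
  | var n, c, k, d, hc => by
      have : n < k := hc
      simp only [liftT]
      split
      · show n < k + d; omega
      · show n + d < k + d; omega
  | lam t, c, k, d, hc => by
      show ClosedUnder (k + d + 1) (liftT d (c+1) t)
      have := closedUnder_liftT t (c+1) (k := k+1) (d := d) hc
      have e : k + 1 + d = k + d + 1 := by omega
      rwa [e] at this
  | app a b, c, k, d, hc =>
      ⟨closedUnder_liftT a c hc.1, closedUnder_liftT b c hc.2⟩
  | shift t, c, k, d, hc => by
      show ClosedUnder (k + d + 1) (liftT d (c+1) t)
      have := closedUnder_liftT t (c+1) (k := k+1) (d := d) hc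
      have e : k + 1 + d = k + d + 1 := by omega
      rwa [e] at this
  | reset t, c, k, d, hc => closedUnder_liftT t c hc

theorem applySub_closedUnder :
    ∀ (t : Tm) {σ : ℕ → Tm} {k}, (∀ n, ClosedUnder k (σ n)) → ClosedUnder k (applySub σ t)
  | var n, _, _, h => h n
  | lam t, σ, k, h => by
      refine applySub_closedUnder t (fun n => ?_)
      cases n with
      | zero => exact Nat.succ_pos k
      | succ n => exact closedUnder_liftT (σ n) 0 (h n)
  | app a b, _, _, h => ⟨applySub_closedUnder a h, applySub_closedUnder b h⟩
  | shift t, σ, k, h => by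
      refine applySub_closedUnder t (fun n => ?_)
      cases n with
      | zero => exact Nat.succ_pos k
      | succ n => exact closedUnder_liftT (σ n) 0 (h n)
  | reset t, _, _, h => applySub_closedUnder t h

theorem liftT_comm :
    ∀ (t : Tm) {c c' d e : ℕ}, c' ≤ c →
      liftT d (c + e) (liftT e c' t) = liftT e c' (liftT d c t)
  | var n, c, c', d, e, h => by
      simp only [liftT]
      rcases lt_or_ge n c' with h1 | h1
      · rw [if_pos h1, if_pos (by omega : n < c)]
        simp only [liftT]
        rw [if_pos (by omega : n < c + e), if_pos h1]
      · rw [if_neg (by omega : ¬ n < c')]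
        rcases lt_or_ge n c with h2 | h2
        · rw [if_pos h2]
          simp only [liftT]
          rw [if_pos (by omega : n + e < c + e), if_neg (by omega : ¬ n < c')]
        · rw [if_neg (by omega : ¬ n < c)]
          simp only [liftT]
          rw [if_neg (by omega : ¬ n + e < c + e), if_neg (by omega : ¬ n + d < c')]
          congr 1; omega
  | lam t, c, c', d, e, h => by
      simp only [liftT]
      have := liftT_comm t (c := c+1) (c' := c'+1) (d := d) (e := e) (by omega)
      have e1 : c + 1 + e = c + e + 1 := by omega
      rw [e1] at this
      rw [this]
  | app a b, c, c', d, e, h => by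
      simp only [liftT]; rw [liftT_comm a h, liftT_comm b h]
  | shift t, c, c', d, e, h => by
      simp only [liftT]
      have := liftT_comm t (c := c+1) (c' := c'+1) (d := d) (e := e) (by omega)
      have e1 : c + 1 + e = c + e + 1 := by omega
      rw [e1] at this
      rw [this]
  | reset t, c, c', d, e, h => by
      simp only [liftT]; rw [liftT_comm t h]

theorem liftT_applySub :
    ∀ (t : Tm) (ρ : ℕ → Tm) (c d : ℕ),
      liftT d c (applySub ρ t) = applySub (fun n => liftT d c (ρ n)) t
  | var n, ρ, c, d => rfl
  | lam t, ρ, c, d => by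
      simp only [applySub, liftT]
      rw [liftT_applySub t (liftSub ρ) (c+1) d]
      have he : (fun n => liftT d (c+1) (liftSub ρ n)) = liftSub (fun n => liftT d c (ρ n)) := by
        funext n
        cases n with
        | zero => simp [liftSub, liftT]
        | succ n =>
            show liftT d (c+1) (liftT 1 0 (ρ n)) = liftT 1 0 (liftT d c (ρ n))
            exact liftT_comm (ρ n) (c' := 0) (Nat.zero_le c)
      rw [he]
  | app a b, ρ, c, d => by
      simp only [applySub, liftT, liftT_applySub a ρ c d, liftT_applySub b ρ c d]
  | shift t, ρ, c, d => by
      simp only [applySub, liftT]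
      rw [liftT_applySub t (liftSub ρ) (c+1) d]
      have he : (fun n => liftT d (c+1) (liftSub ρ n)) = liftSub (fun n => liftT d c (ρ n)) := by
        funext n
        cases n with
        | zero => simp [liftSub, liftT]
        | succ n =>
            show liftT d (c+1) (liftT 1 0 (ρ n)) = liftT 1 0 (liftT d c (ρ n))
            exact liftT_comm (ρ n) (c' := 0) (Nat.zero_le c)
      rw [he]
  | reset t, ρ, c, d => by
      simp only [applySub, liftT, liftT_applySub t ρ c d]

/-- Substitution shifted past a lift. -/
def shiftσ (σ : ℕ → Tm) (c d : ℕ) : ℕ → Tm := fun n => if n < c then σ n else σ (n + d)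

theorem shiftσ_lt {σ : ℕ → Tm} {c d n : ℕ} (h : n < c) : shiftσ σ c d n = σ n := by
  simp [shiftσ, h]

theorem shiftσ_ge {σ : ℕ → Tm} {c d n : ℕ} (h : ¬ n < c) : shiftσ σ c d n = σ (n + d) := by
  simp [shiftσ, h]

theorem liftSub_shiftσ (σ : ℕ → Tm) (c d : ℕ) :
    liftSub (shiftσ σ c d) = shiftσ (liftSub σ) (c+1) d := by
  funext n
  cases n with
  | zero => simp [liftSub, shiftσ]
  | succ n =>
      show liftT 1 0 (shiftσ σ c d n) = shiftσ (liftSub σ) (c+1) d (n+1)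
      by_cases h : n < c
      · rw [shiftσ_lt h, shiftσ_lt (by omega : n + 1 < c + 1)]; rfl
      · rw [shiftσ_ge h, shiftσ_ge (by omega : ¬ n + 1 < c + 1)]
        show liftT 1 0 (σ (n + d)) = liftSub σ (n + 1 + d)
        have e : n + 1 + d = (n + d) + 1 := by omega
        rw [e]; rfl

theorem applySub_liftT :
    ∀ (t : Tm) (σ : ℕ → Tm) (c d : ℕ), applySub σ (liftT d c t) = applySub (shiftσ σ c d) t
  | var n, σ, c, d => by
      simp only [liftT]
      split
      · exact (shiftσ_lt ‹_›).symm
      · exact (shiftσ_ge ‹_›).symm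
  | lam t, σ, c, d => by
      simp only [liftT, applySub, applySub_liftT t (liftSub σ) (c+1) d, liftSub_shiftσ]
  | app a b, σ, c, d => by
      simp only [liftT, applySub, applySub_liftT a σ c d, applySub_liftT b σ c d]
  | shift t, σ, c, d => by
      simp only [liftT, applySub, applySub_liftT t (liftSub σ) (c+1) d, liftSub_shiftσ]
  | reset t, σ, c, d => by
      simp only [liftT, applySub, applySub_liftT t σ c d]

theorem closingSub_shiftσ {σ : ℕ → Tm} (h : ClosingSub σ) (c d : ℕ) :
    ClosingSub (shiftσ σ c d) := by
  intro n; unfold shiftσ; split <;> exact h _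

theorem openExt_liftT {t0 t1 : Tm} (h : OpenExt Bisim t0 t1) (c d : ℕ) :
    OpenExt Bisim (liftT d c t0) (liftT d c t1) := by
  intro σ hσ
  rw [applySub_liftT, applySub_liftT]
  exact h _ (closingSub_shiftσ hσ c d)

theorem howe_liftT {t0 t1 : Tm} (h : Howe t0 t1) (d : ℕ) :
    ∀ c, Howe (liftT d c t0) (liftT d c t1) := by
  induction h with
  | base h => exact fun c => Howe.base (openExt_liftT h c d)
  | right _ h2 ih => exact fun c => Howe.right (ih c) (openExt_liftT h2 c d)
  | compVar n => intro c; simp only [liftT]; split <;> exact Howe.compVar _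
  | compLam _ ih => exact fun c => Howe.compLam (ih (c+1))
  | compApp _ _ iha ihb => exact fun c => Howe.compApp (iha c) (ihb c)
  | compShift _ ih => exact fun c => Howe.compShift (ih (c+1))
  | compReset _ ih => exact fun c => Howe.compReset (ih c)

/-- Substitution extended by a value at index j. -/
def consSub (σ : ℕ → Tm) (j : ℕ) (v : Tm) : ℕ → Tm := fun n =>
  if n < j then σ n else if n = j then applySub (fun m => σ (m + j)) v else σ (n - 1)

theorem consSub_lt {σ : ℕ → Tm} {j v n} (h : n < j) : consSub σ j v n = σ n := by
  simp [consSub, h]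

theorem consSub_self {σ : ℕ → Tm} {j v} :
    consSub σ j v j = applySub (fun m => σ (m + j)) v := by
  simp [consSub]

theorem consSub_gt {σ : ℕ → Tm} {j v n} (h : j < n) : consSub σ j v n = σ (n - 1) := by
  have h1 : ¬ n < j := by omega
  have h2 : n ≠ j := by omega
  simp [consSub, h1, h2]

theorem liftSub_consSub (σ : ℕ → Tm) (j : ℕ) (v : Tm) :
    liftSub (consSub σ j v) = consSub (liftSub σ) (j+1) v := by
  funext n
  cases n with
  | zero =>
      show var 0 = consSub (liftSub σ) (j+1) v 0
      rw [consSub_lt (by omega : 0 < j + 1)]; rfl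
  | succ n =>
      show liftT 1 0 (consSub σ j v n) = consSub (liftSub σ) (j+1) v (n+1)
      rcases lt_trichotomy n j with h | h | h
      · rw [consSub_lt h, consSub_lt (by omega : n + 1 < j + 1)]; rfl
      · subst h
        rw [consSub_self, consSub_self]
        rw [liftT_applySub]
        have he : (fun m => liftT 1 0 (σ (m + n))) = (fun m => liftSub σ (m + (n + 1))) := by
          funext m
          have e : m + (n + 1) = (m + n) + 1 := by omega
          rw [e]; rfl
        rw [he]
      · rw [consSub_gt h, consSub_gt (by omega : j + 1 < n + 1)]
        have e : n + 1 - 1 = (n - 1) + 1 := by omega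
        rw [e]; rfl

theorem applySub_substT :
    ∀ (t : Tm) (σ : ℕ → Tm) (j : ℕ) (v : Tm),
      applySub σ (substT j v t) = applySub (consSub σ j v) t
  | var n, σ, j, v => by
      rcases lt_trichotomy n j with h | h | h
      · have h1 : n ≠ j := by omega
        have h2 : ¬ j < n := by omega
        simp only [substT, if_neg h1, if_neg h2]
        exact (consSub_lt h).symm
      · subst h
        have e0 : substT n v (var n) = liftT n 0 v := by simp [substT]
        rw [e0, applySub_liftT]
        show applySub (shiftσ σ 0 n) v = applySub (consSub σ n v) (var n)
        show applySub (shiftσ σ 0 n) v = consSub σ n v n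
        rw [consSub_self]
        have he : shiftσ σ 0 n = (fun m => σ (m + n)) := by
          funext m
          rw [shiftσ_ge (by omega : ¬ m < 0)]
        rw [he]
      · have h1 : n ≠ j := by omega
        simp only [substT, if_neg h1, if_pos h]
        exact (consSub_gt h).symm
  | lam t, σ, j, v => by
      simp only [substT, applySub]
      rw [applySub_substT t (liftSub σ) (j+1) v, liftSub_consSub]
  | app a b, σ, j, v => by
      simp only [substT, applySub, applySub_substT a σ j v, applySub_substT b σ j v]
  | shift t, σ, j, v => by
      simp only [substT, applySub]
      rw [applySub_substT t (liftSub σ) (j+1) v, liftSub_consSub]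
  | reset t, σ, j, v => by
      simp only [substT, applySub, applySub_substT t σ j v]

theorem closingSub_consSub {σ : ℕ → Tm} (hσ : ClosingSub σ) (j : ℕ) {v : Tm}
    (hv : IsValue v) : ClosingSub (consSub σ j v) := by
  intro n
  rcases lt_trichotomy n j with h | h | h
  · rw [consSub_lt h]; exact hσ n
  · subst h
    rw [consSub_self]
    obtain ⟨b, rfl⟩ := hv
    exact ⟨⟨_, rfl⟩, applySub_closedUnder _ (fun m => (hσ _).2)⟩
  · rw [consSub_gt h]; exact hσ _

theorem openExt_substT {t0 t1 : Tm} (h : OpenExt Bisim t0 t1) {v : Tm} (hv : IsValue v)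
    (j : ℕ) : OpenExt Bisim (substT j v t0) (substT j v t1) := by
  intro σ hσ
  rw [applySub_substT, applySub_substT]
  exact h _ (closingSub_consSub hσ j hv)

theorem howe_self_subst {v0 v1 : Tm} (hv : Howe v0 v1) :
    ∀ (t : Tm) (j : ℕ), Howe (substT j v0 t) (substT j v1 t)
  | var n, j => by
      rcases eq_or_ne n j with h | h
      · subst h
        simp only [substT, if_pos rfl]
        exact howe_liftT hv n 0
      · simp only [substT, if_neg h]
        split <;> exact Howe.compVar _
  | lam t, j => Howe.compLam (howe_self_subst hv t (j+1))
  | app a b, j => Howe.compApp (howe_self_subst hv a j) (howe_self_subst hv b j)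
  | shift t, j => Howe.compShift (howe_self_subst hv t (j+1))
  | reset t, j => Howe.compReset (howe_self_subst hv t j)

end LamS
open LamS LamS.Tm in
/-- Howe's closure is substitutive. -/
theorem howe_substitutive :
    ∀ t0 t1 v0 v1 : Tm, Howe t0 t1 → Howe v0 v1 → IsValue v0 → IsValue v1 →
      ∀ j : ℕ, Howe (substT j v0 t0) (substT j v1 t1) := by
  intro t0 t1 v0 v1 h hv _ hv1
  induction h with
  | base h => exact fun j => Howe.right (howe_self_subst hv _ j) (openExt_substT h hv1 j)
  | right _ h2 ih => exact fun j => Howe.right (ih j) (openExt_substT h2 hv1 j)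
  | compVar n =>
      intro j
      rcases eq_or_ne n j with h | h
      · subst h
        simp only [substT, if_pos rfl]
        exact howe_liftT hv n 0
      · simp only [substT, if_neg h]
        split <;> exact Howe.compVar _
  | compLam _ ih => exact fun j => Howe.compLam (ih (j+1))
  | compApp _ _ iha ihb => exact fun j => Howe.compApp (iha j) (ihb j)
  | compShift _ ih => exact fun j => Howe.compShift (ih (j+1))
  | compReset _ ih => exact fun j => Howe.compReset (ih j)
end
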